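/- Gradient-reconstruction error for limited memory: for M ⊆ X, the difference between the gradient of the full-batch objective ℓ̄(w) and the gradient of the K-prior K(w; w*, M) equals Σ_{i∈X∖M} φ_i (h(φ_i^⊤w) − h(φ_i^⊤w*)). -/

import Mathlib

open RealInnerProductSpace

section Aux

variable {P : ℕ} {ι : Type*}

lemma key_grad (S : Finset ι) (φ : ι → EuclideanSpace ℝ (Fin P)) (c : ι → ℝ)
    (A h : ℝ → ℝ) (hA : ∀ x, HasDerivAt A (h x) x) (δ : ℝ)
    (v w : EuclideanSpace ℝ (Fin P)) :
    HasGradientAt (fun w => ∑ i ∈ S, (-(c i) * ⟪φ i, w⟫ + A ⟪φ i, w⟫)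
        + (δ / 2) * ‖w - v‖ ^ 2)
      (∑ i ∈ S, (h ⟪φ i, w⟫ - c i) • φ i + δ • (w - v)) w := by
  rw [hasGradientAt_iff_hasFDerivAt]
  have h1 : ∀ i ∈ S, HasFDerivAt (fun w : EuclideanSpace ℝ (Fin P) =>
      -(c i) * ⟪φ i, w⟫ + A ⟪φ i, w⟫)
      ((h ⟪φ i, w⟫ - c i) • innerSL ℝ (φ i)) w := by
    intro i _
    have hinner : HasFDerivAt (fun w : EuclideanSpace ℝ (Fin P) => ⟪φ i, w⟫)
        (innerSL ℝ (φ i)) w := (innerSL ℝ (φ i)).hasFDerivAt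
    have h2 := (hA ⟪φ i, w⟫).comp_hasFDerivAt w hinner
    have h3 := (hinner.const_mul (-(c i))).add h2
    refine h3.congr_fderiv ?_
    ext u
    simp [sub_smul]
    ring
  have hq : HasFDerivAt (fun w : EuclideanSpace ℝ (Fin P) => (δ / 2) * ‖w - v‖ ^ 2)
      (δ • innerSL ℝ (w - v)) w := by
    have hid : HasFDerivAt (fun w : EuclideanSpace ℝ (Fin P) => w - v)
        (ContinuousLinearMap.id ℝ _) w := (hasFDerivAt_id w).sub_const v
    have h2 := (hid.inner ℝ hid).const_mul (δ / 2)
    have heq : (fun w : EuclideanSpace ℝ (Fin P) => (δ / 2) * ⟪w - v, w - v⟫)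
        = fun w => (δ / 2) * ‖w - v‖ ^ 2 := by
      funext u; rw [real_inner_self_eq_norm_sq]
    rw [heq] at h2
    refine h2.congr_fderiv ?_
    ext u
    simp [real_inner_comm, mul_sub, sub_mul, Finset.sum_sub_distrib,
      mul_comm (u _)]
    rw [inner_sub_right, real_inner_comm w u, real_inner_comm v u]
    ring
  have htot := (HasFDerivAt.fun_sum h1).add hq
  refine htot.congr_fderiv ?_
  ext u
  simp [inner_add_left, inner_sum, sum_inner, inner_smul_left, real_inner_comm]

end Aux

/-- Gradient-reconstruction error for limited memory: for `M ⊆ X`, the difference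
between the gradient of the full-batch objective `ℓ̄(w)` and the gradient of the
K-prior `K(w; w*, M)` equals `Σ_{i∈X∖M} φ_i (h(φ_i^⊤w) − h(φ_i^⊤w*))`. -/
theorem stmt5 {P : ℕ} {ι : Type*} [DecidableEq ι] (X M : Finset ι) (hM : M ⊆ X)
    (φ : ι → EuclideanSpace ℝ (Fin P)) (y : ι → ℝ)
    (A h : ℝ → ℝ) (hA : ∀ x, HasDerivAt A (h x) x)
    (δ : ℝ) (hδ : 0 < δ)
    (wstar : EuclideanSpace ℝ (Fin P))
    (hstat : ∑ i ∈ X, (h ⟪φ i, wstar⟫ - y i) • φ i + δ • wstar = 0)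
    (w : EuclideanSpace ℝ (Fin P)) :
    gradient (fun w => ∑ i ∈ X, (-(y i) * ⟪φ i, w⟫ + A ⟪φ i, w⟫)
        + (δ / 2) * ‖w‖ ^ 2) w
      - gradient (fun w => ∑ i ∈ M, (-(h ⟪φ i, wstar⟫) * ⟪φ i, w⟫ + A ⟪φ i, w⟫)
        + (δ / 2) * ‖w - wstar‖ ^ 2) w
      = ∑ i ∈ X \ M, (h ⟪φ i, w⟫ - h ⟪φ i, wstar⟫) • φ i := by
  have g1 : gradient (fun w => ∑ i ∈ X, (-(y i) * ⟪φ i, w⟫ + A ⟪φ i, w⟫)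
      + (δ / 2) * ‖w‖ ^ 2) w
      = ∑ i ∈ X, (h ⟪φ i, w⟫ - y i) • φ i + δ • (w - 0) := by
    have := (key_grad X φ y A h hA δ 0 w).gradient
    simpa using this
  have g2 : gradient (fun w => ∑ i ∈ M, (-(h ⟪φ i, wstar⟫) * ⟪φ i, w⟫ + A ⟪φ i, w⟫)
      + (δ / 2) * ‖w - wstar‖ ^ 2) w
      = ∑ i ∈ M, (h ⟪φ i, w⟫ - h ⟪φ i, wstar⟫) • φ i + δ • (w - wstar) :=
    (key_grad M φ (fun i => h ⟪φ i, wstar⟫) A h hA δ wstar w).gradient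
  rw [g1, g2]
  have hsplit : ∑ i ∈ X, (h ⟪φ i, w⟫ - h ⟪φ i, wstar⟫) • φ i
      = ∑ i ∈ X \ M, (h ⟪φ i, w⟫ - h ⟪φ i, wstar⟫) • φ i
        + ∑ i ∈ M, (h ⟪φ i, w⟫ - h ⟪φ i, wstar⟫) • φ i :=
    (Finset.sum_sdiff hM).symm
  have hX : ∑ i ∈ X, (h ⟪φ i, w⟫ - y i) • φ i
      = ∑ i ∈ X, (h ⟪φ i, w⟫ - h ⟪φ i, wstar⟫) • φ i
        + ∑ i ∈ X, (h ⟪φ i, wstar⟫ - y i) • φ i := by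
    rw [← Finset.sum_add_distrib]
    congr 1; funext i
    rw [← add_smul]; ring_nf
  have hstar : ∑ i ∈ X, (h ⟪φ i, wstar⟫ - y i) • φ i = -(δ • wstar) := by
    linear_combination (norm := module) hstat
  rw [hX, hstar, hsplit]
  module
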